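/- Let M ≥ 1, let v_1, …, v_M be positive real numbers, and let α be a real number with α > ∏_{m=1}^M v_m > 0. Let A := S_α^{−1} · diag(v_1, …, v_M), where S_α is the constant matrix obtained from S by substituting y = (−1)^M α. Then E + A is invertible and every entry of (E + A)^{−1} satisfies (−1)^{i+j} ((E + A)^{−1})_{i,j} > 0; equivalently, P (E + A)^{−1} P is an entrywise positive matrix. -/

import Mathlib

open Finset Matrix


/-- The constant real `M × M` matrix `S_α`, obtained from `S` by substituting
`y = (−1)^M α`: `(i,j)`-entry `1` if `j = i+1`, `(−1)^M α` if `(i,j) = (M,1)`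
(in 1-based indexing), `0` otherwise. -/
noncomputable def SmatR (M : ℕ) (α : ℝ) : Matrix (Fin M) (Fin M) ℝ :=
  Matrix.of fun i j =>
    if (j : ℕ) = (i : ℕ) + 1 then 1
    else if (i : ℕ) = M - 1 ∧ (j : ℕ) = 0 then (-1 : ℝ) ^ M * α else 0

noncomputable def Tmat (M : ℕ) (α : ℝ) : Matrix (Fin M) (Fin M) ℝ :=
  Matrix.of fun i j =>
    if (i : ℕ) = (j : ℕ) + 1 then 1
    else if (i : ℕ) = 0 ∧ (j : ℕ) = M - 1 then (-1 : ℝ) ^ M / α else 0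

lemma neg_one_pow_sq' (M : ℕ) : ((-1:ℝ)^M)^2 = 1 := by
  rw [← pow_mul, mul_comm, pow_mul, neg_one_sq, one_pow]

lemma SmatR_mul_Tmat (M : ℕ) (hM : 1 ≤ M) (α : ℝ) (hα : α ≠ 0) :
    SmatR M α * Tmat M α = 1 := by
  ext i k
  rw [Matrix.mul_apply, Matrix.one_apply]
  by_cases hi : (i : ℕ) + 1 < M
  · rw [Finset.sum_eq_single (⟨(i:ℕ)+1, hi⟩ : Fin M)]
    · simp only [SmatR, Tmat, Matrix.of_apply, Fin.ext_iff]
      split_ifs <;> first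
        | omega
        | (simp_all [pow_mul, neg_one_pow_sq', mul_inv_cancel₀ hα]; done)
    · intro j _ hj
      have h1 : (j:ℕ) ≠ (i:ℕ)+1 := fun h => hj (Fin.ext h)
      have h2 : (i:ℕ) ≠ M - 1 := by omega
      simp only [SmatR, Matrix.of_apply]
      rw [if_neg h1, if_neg (by tauto), zero_mul]
    · intro h; exact absurd (Finset.mem_univ _) h
  · have hiM : (i:ℕ) = M - 1 := by have := i.isLt; omega
    rw [Finset.sum_eq_single (⟨0, by omega⟩ : Fin M)]
    · simp only [SmatR, Tmat, Matrix.of_apply, Fin.ext_iff]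
      split_ifs <;> first
        | omega
        | (simp_all [pow_mul, neg_one_pow_sq', mul_inv_cancel₀ hα]; done)
        | (rw [mul_comm ((-1:ℝ)^M) α, mul_assoc, div_eq_mul_inv,
            ← mul_assoc ((-1:ℝ)^M), ← pow_add,
            Even.neg_one_pow (⟨M, rfl⟩ : Even (M+M)), one_mul,
            mul_inv_cancel₀ hα])
    · intro j _ hj
      have h1 : (j:ℕ) ≠ 0 := fun h => hj (Fin.ext h)
      have h2 : (j:ℕ) ≠ (i:ℕ)+1 := by have := j.isLt; omega
      simp only [SmatR, Matrix.of_apply]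
      rw [if_neg h2, if_neg (by tauto), zero_mul]
    · intro h; exact absurd (Finset.mem_univ _) h

lemma Tmat_eq_inv (M : ℕ) (hM : 1 ≤ M) (α : ℝ) (hα : α ≠ 0) :
    (SmatR M α)⁻¹ = Tmat M α :=
  Matrix.inv_eq_right_inv (SmatR_mul_Tmat M hM α hα)

noncomputable def pfun (M : ℕ) (v' : ℕ → ℝ) (α : ℝ) (i j : Fin M) : ℝ :=
  if (j:ℕ) ≤ (i:ℕ) then ∏ m ∈ Finset.Ico (j:ℕ) (i:ℕ), v' m
  else (∏ m ∈ Finset.range (i:ℕ), v' m) * (∏ m ∈ Finset.Ico (j:ℕ) M, v' m) / α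

noncomputable def Bmat (M : ℕ) (v' : ℕ → ℝ) (α c : ℝ) : Matrix (Fin M) (Fin M) ℝ :=
  Matrix.of fun i j => c * ((-1:ℝ)^((i:ℕ)+(j:ℕ)) * pfun M v' α i j)

lemma key_inv (M : ℕ) (hM : 1 ≤ M) (v' : ℕ → ℝ) (α : ℝ) (hα : 0 < α)
    (c : ℝ)
    (hc : c * (1 - (∏ m ∈ Finset.range M, v' m) / α) = 1)
    (A : Matrix (Fin M) (Fin M) ℝ)
    (hAe : ∀ i j : Fin M, A i j =
      (if (i:ℕ) = (j:ℕ)+1 then 1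
       else if (i:ℕ) = 0 ∧ (j:ℕ) = M-1 then (-1:ℝ)^M/α else 0) * v' (j:ℕ)) :
    (1 + A) * Bmat M v' α c = 1 := by
  have hα' : α ≠ 0 := ne_of_gt hα
  ext i j
  rw [Matrix.add_mul, Matrix.one_mul, Matrix.add_apply, Matrix.mul_apply,
    Matrix.one_apply]
  by_cases hi : 0 < (i:ℕ)
  · -- row i ≥ 1 : A i k nonzero only at k = i - 1
    obtain ⟨n, hn⟩ : ∃ n, (i:ℕ) = n + 1 := ⟨(i:ℕ)-1, by omega⟩
    have hn1 : n < M := by have := i.isLt; omega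
    rw [Finset.sum_eq_single (⟨n, hn1⟩ : Fin M)]
    · have hae : A i (⟨n, hn1⟩ : Fin M) = v' n := by
        rw [hAe]
        simp only [Fin.val_mk]
        rw [if_pos (by omega), one_mul]
      rw [hae]
      simp only [Bmat, Matrix.of_apply, pfun, Fin.val_mk, hn]
      have hs : (-1:ℝ)^(n+1+(j:ℕ)) = -(-1:ℝ)^(n+(j:ℕ)) := by
        rw [show n+1+(j:ℕ) = (n+(j:ℕ))+1 by omega, pow_succ]; ring
      rw [hs]
      by_cases hj1 : (j:ℕ) ≤ n + 1
      · by_cases hj2 : (j:ℕ) ≤ n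
        · -- j ≤ n < i : both non-wrap, off-diagonal
          have hij : ¬ i = j := fun h => by rw [h] at hn; omega
          rw [if_neg hij, if_pos hj1, if_pos hj2,
            Finset.prod_Ico_succ_top hj2 v']
          ring
        · -- j = n+1 : diagonal entry
          have hji : (j:ℕ) = n + 1 := by omega
          have hij : i = j := Fin.ext (by omega)
          rw [if_pos hij, if_pos hj1, if_neg (by omega), hji, Finset.Ico_self,
            Finset.prod_empty]
          have sd : (-1:ℝ)^(n+(n+1)) = -1 := Odd.neg_one_pow ⟨n, by omega⟩
          rw [sd]
          have e4 : v' n * ((∏ m ∈ range n, v' m) * (∏ m ∈ Ico (n+1) M, v' m))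
              = ∏ m ∈ range M, v' m := by
            rw [← Finset.prod_range_mul_prod_Ico v' (show n+1 ≤ M by omega),
              Finset.prod_range_succ]
            ring
          linear_combination hc - (c/α) * e4
      · -- j > i : both wrap
        have hij : ¬ i = j := fun h => by rw [h] at hn; omega
        rw [if_neg hij, if_neg hj1, if_neg (by omega)]
        have e2 : (∏ m ∈ range n, v' m) * v' n = ∏ m ∈ range (n+1), v' m :=
          (Finset.prod_range_succ v' n).symm
        linear_combination
          (c * (-1:ℝ)^(n+(j:ℕ)) * (∏ m ∈ Ico ((j:ℕ)) M, v' m) / α) * e2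
    · intro k _ hk
      rw [hAe, if_neg (fun h => hk (Fin.ext (show (k:ℕ) = n by omega))),
        if_neg (by omega), zero_mul, zero_mul]
    · intro h; exact absurd (Finset.mem_univ _) h
  · -- row i = 0 : A i k nonzero only at k = M-1
    have hi0 : (i:ℕ) = 0 := by omega
    have hM1 : M - 1 < M := by omega
    rw [Finset.sum_eq_single (⟨M-1, hM1⟩ : Fin M)]
    · have hae : A i (⟨M-1, hM1⟩ : Fin M) = (-1:ℝ)^M/α * v' (M-1) := by
        rw [hAe]
        simp only [Fin.val_mk]
        rw [if_neg (by omega), if_pos ⟨hi0, trivial⟩]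
      rw [hae]
      simp only [Bmat, Matrix.of_apply, pfun, Fin.val_mk, hi0]
      by_cases hj0 : (j:ℕ) = 0
      · -- diagonal entry (0,0)
        have hij : i = j := Fin.ext (by omega)
        rw [if_pos hij, if_pos (by omega), hj0, Finset.Ico_self,
          Finset.prod_empty, if_pos (by omega)]
        have sM : (-1:ℝ)^(M-1+0) * (-1:ℝ)^M = -1 := by
          rw [← pow_add, show M-1+0+M = 2*(M-1)+1 by omega]
          exact Odd.neg_one_pow ⟨M-1, rfl⟩
        have e0 : (∏ m ∈ Ico 0 (M-1), v' m) * v' (M-1) = ∏ m ∈ range M, v' m := by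
          rw [← Finset.range_eq_Ico, ← Finset.prod_range_succ,
            show M-1+1 = M by omega]
        linear_combination hc - (c/α) * e0 +
          (c * v' (M-1) * (∏ m ∈ Ico 0 (M-1), v' m) / α) * sM
      · -- off-diagonal, first row
        have hij : ¬ i = j := fun h => by rw [h] at hi0; omega
        rw [if_neg hij, if_neg (by omega), if_pos (show (j:ℕ) ≤ M-1 by
          have := j.isLt; omega), Finset.prod_range_zero]
        have sM2 : (-1:ℝ)^(M-1+(j:ℕ)) * (-1:ℝ)^M = -(-1:ℝ)^(j:ℕ) := by
          rw [← pow_add, show M-1+(j:ℕ)+M = 2*(M-1) + ((j:ℕ)+1) by omega,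
            pow_add, pow_mul, neg_one_sq, one_pow, pow_succ]
          ring
        have e1 : (∏ m ∈ Ico (j:ℕ) (M-1), v' m) * v' (M-1)
            = ∏ m ∈ Ico (j:ℕ) M, v' m := by
          rw [← Finset.prod_Ico_succ_top (show (j:ℕ) ≤ M-1 by
            have := j.isLt; omega), show M-1+1 = M by omega]
        linear_combination -(c * (-1:ℝ)^(j:ℕ) / α) * e1 +
          (c * v' (M-1) * (∏ m ∈ Ico (j:ℕ) (M-1), v' m) / α) * sM2
    · intro k _ hk
      rw [hAe, if_neg (by omega),
        if_neg (fun h => hk (Fin.ext (show (k:ℕ) = M-1 from h.2))), zero_mul,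
        zero_mul]
    · intro h; exact absurd (Finset.mem_univ _) h

/-- with `A = S_α⁻¹ diag(v)` for positive `v` and `α > ∏ v_m > 0`,
`E + A` is invertible and the entries of `(E + A)⁻¹` have strict sign pattern
`(−1)^{i+j}`; equivalently, `P (E + A)⁻¹ P` is entrywise positive, where
`P = diag(1,−1,1,…)`. -/
theorem neumann_series_sign_pattern (M : ℕ) (hM : 1 ≤ M)
    (v : Fin M → ℝ) (hv : ∀ m, 0 < v m)
    (α : ℝ) (hα : ∏ m, v m < α)
    (A : Matrix (Fin M) (Fin M) ℝ)
    (hA : A = (SmatR M α)⁻¹ * Matrix.diagonal v) :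
    IsUnit (1 + A) ∧
    (∀ i j : Fin M, 0 < (-1 : ℝ) ^ ((i : ℕ) + (j : ℕ)) * (1 + A)⁻¹ i j) ∧
    (∀ i j : Fin M,
      0 < (Matrix.diagonal (fun k : Fin M => (-1 : ℝ) ^ (k : ℕ)) * (1 + A)⁻¹ *
            Matrix.diagonal (fun k : Fin M => (-1 : ℝ) ^ (k : ℕ))) i j) := by
  have hprod : 0 < ∏ m, v m := Finset.prod_pos fun m _ => hv m
  have hα0 : 0 < α := lt_trans hprod hα
  set v' : ℕ → ℝ := fun m => if h : m < M then v ⟨m, h⟩ else 1 with hv'def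
  have hv'eq : ∀ k : Fin M, v' (k : ℕ) = v k := by
    intro k; simp [hv'def, k.isLt]
  have hv'pos : ∀ m, 0 < v' m := by
    intro m; simp only [hv'def]
    split
    · exact hv _
    · exact one_pos
  have hQ : ∏ m ∈ Finset.range M, v' m = ∏ m, v m := by
    rw [← Fin.prod_univ_eq_prod_range v' M]
    exact Finset.prod_congr rfl fun k _ => hv'eq k
  have hc0 : 0 < 1 - (∏ m ∈ Finset.range M, v' m) / α := by
    rw [hQ]
    have h1 : (∏ m, v m) / α < 1 := (div_lt_one hα0).mpr hα
    linarith
  set c : ℝ := (1 - (∏ m ∈ Finset.range M, v' m) / α)⁻¹ with hcdef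
  have hcpos : 0 < c := inv_pos.mpr hc0
  have hc : c * (1 - (∏ m ∈ Finset.range M, v' m) / α) = 1 :=
    inv_mul_cancel₀ (ne_of_gt hc0)
  have hAe : ∀ i j : Fin M, A i j =
      (if (i:ℕ) = (j:ℕ)+1 then 1
       else if (i:ℕ) = 0 ∧ (j:ℕ) = M-1 then (-1:ℝ)^M/α else 0) * v' (j:ℕ) := by
    intro i j
    rw [hA, Tmat_eq_inv M hM α (ne_of_gt hα0), Matrix.mul_diagonal, hv'eq]
    rfl
  have key : (1 + A) * Bmat M v' α c = 1 :=
    key_inv M hM v' α hα0 c hc A hAe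
  have hinv : (1 + A)⁻¹ = Bmat M v' α c := Matrix.inv_eq_right_inv key
  have hppos : ∀ i j : Fin M, 0 < pfun M v' α i j := by
    intro i j
    unfold pfun
    split
    · exact Finset.prod_pos fun m _ => hv'pos m
    · exact div_pos (mul_pos (Finset.prod_pos fun m _ => hv'pos m)
        (Finset.prod_pos fun m _ => hv'pos m)) hα0
  have claim2 : ∀ i j : Fin M,
      0 < (-1 : ℝ) ^ ((i : ℕ) + (j : ℕ)) * (1 + A)⁻¹ i j := by
    intro i j
    have sq : (-1:ℝ)^((i:ℕ)+(j:ℕ)) * (-1:ℝ)^((i:ℕ)+(j:ℕ)) = 1 := by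
      rw [← pow_add]; exact Even.neg_one_pow ⟨_, rfl⟩
    have heq : (-1 : ℝ) ^ ((i : ℕ) + (j : ℕ)) * (1 + A)⁻¹ i j
        = c * pfun M v' α i j := by
      rw [hinv]
      simp only [Bmat, Matrix.of_apply]
      linear_combination (c * pfun M v' α i j) * sq
    rw [heq]
    exact mul_pos hcpos (hppos i j)
  refine ⟨⟨⟨1 + A, Bmat M v' α c, key, mul_eq_one_comm.mp key⟩, rfl⟩,
    claim2, ?_⟩
  intro i j
  rw [Matrix.mul_diagonal, Matrix.diagonal_mul]
  have heq : (-1:ℝ)^(i:ℕ) * (1 + A)⁻¹ i j * (-1:ℝ)^(j:ℕ)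
      = (-1:ℝ)^((i:ℕ)+(j:ℕ)) * (1 + A)⁻¹ i j := by
    rw [pow_add]; ring
  rw [heq]
  exact claim2 i j
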